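/- For every real ε > 0 there exist a real constant a > 0 and a natural number N₀ such that for all integers n ≥ N₀ and all integers t with (t : ℝ) > n^(2+ε), the following holds: for every finite set S of vectors in (ZMod 2)^(n²) (i.e., every Finset of functions Fin (n²) → ZMod 2) with |S| ≥ t, there exists a nonempty subset S' ⊆ S with (|S'| : ℝ) ≤ a · n² / log n such that the sum over all x ∈ S' of x equals the zero vector. -/

import Mathlib

set_option maxHeartbeats 1000000

/-- Pigeonhole core: if there are more `k`-subsets of `S` than vectors, two of them share a
sum, and their symmetric difference is a nonempty zero-sum subset of size at most `2k`. -/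
lemma aux_pigeon_zero_sum {m k : ℕ} (S : Finset (Fin m → ZMod 2))
    (hcount : 2 ^ m < S.card.choose k) :
    ∃ S' ⊆ S, S'.Nonempty ∧ S'.card ≤ 2 * k ∧ ∑ x ∈ S', x = 0 := by
  have hcard : (Finset.univ : Finset (Fin m → ZMod 2)).card <
      (Finset.powersetCard k S).card := by
    rw [Finset.card_univ, Finset.card_powersetCard]
    simpa using hcount
  obtain ⟨A, hA, B, hB, hAB, hsum⟩ :=
    Finset.exists_ne_map_eq_of_card_lt_of_maps_to hcard
      (fun A _ => Finset.mem_univ (∑ x ∈ A, x))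
  rw [Finset.mem_powersetCard] at hA hB
  have h2 : ∀ v : Fin m → ZMod 2, v + v = 0 := fun v =>
    funext fun i => CharTwo.add_self_eq_zero _
  refine ⟨(A \ B) ∪ (B \ A), ?_, ?_, ?_, ?_⟩
  · exact Finset.union_subset ((Finset.sdiff_subset).trans hA.1)
      ((Finset.sdiff_subset).trans hB.1)
  · rw [Finset.nonempty_iff_ne_empty]
    intro h
    have h1 : A \ B = ∅ := Finset.union_eq_empty.mp h |>.1
    have h2' : B \ A = ∅ := Finset.union_eq_empty.mp h |>.2
    exact hAB (Finset.Subset.antisymm (Finset.sdiff_eq_empty_iff_subset.mp h1)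
      (Finset.sdiff_eq_empty_iff_subset.mp h2'))
  · calc ((A \ B) ∪ (B \ A)).card ≤ (A \ B).card + (B \ A).card :=
          Finset.card_union_le _ _
      _ ≤ A.card + B.card :=
          Nat.add_le_add (Finset.card_le_card Finset.sdiff_subset)
            (Finset.card_le_card Finset.sdiff_subset)
      _ ≤ 2 * k := by omega
  · have hdisj : Disjoint (A \ B) (B \ A) := disjoint_sdiff_sdiff
    rw [Finset.sum_union hdisj]
    have e1 : ∑ x ∈ A \ B, x = (∑ x ∈ A, x) - ∑ x ∈ A ∩ B, x := by
      rw [← Finset.sdiff_inter_self_left A B]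
      exact Finset.sum_sdiff_eq_sub Finset.inter_subset_left
    have e2 : ∑ x ∈ B \ A, x = (∑ x ∈ B, x) - ∑ x ∈ A ∩ B, x := by
      rw [← Finset.sdiff_inter_self_left B A, Finset.inter_comm A B]
      exact Finset.sum_sdiff_eq_sub Finset.inter_subset_left
    rw [e1, e2, hsum]
    have h3 := h2 ((∑ x ∈ B, x) - ∑ x ∈ A ∩ B, x)
    calc (∑ x ∈ B, x) - (∑ x ∈ A ∩ B, x) + ((∑ x ∈ B, x) - ∑ x ∈ A ∩ B, x)
        = ((∑ x ∈ B, x) - ∑ x ∈ A ∩ B, x) + ((∑ x ∈ B, x) - ∑ x ∈ A ∩ B, x) := by ring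
      _ = 0 := h3

theorem exists_small_zero_sum_subset (ε : ℝ) (hε : 0 < ε) :
    ∃ (a : ℝ) (N₀ : ℕ), 0 < a ∧
      ∀ n : ℕ, N₀ ≤ n → ∀ t : ℕ, (t : ℝ) > (n : ℝ) ^ ((2 : ℝ) + ε) →
        ∀ S : Finset (Fin (n ^ 2) → ZMod 2), t ≤ S.card →
          ∃ S' ⊆ S, S'.Nonempty ∧ (S'.card : ℝ) ≤ a * (n : ℝ) ^ 2 / Real.log n ∧
            ∑ x ∈ S', x = 0 := by
  refine ⟨4 / ε + 2, max 2 ⌈Real.exp (4 / ε)⌉₊, by positivity, ?_⟩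
  intro n hn t ht S hS
  -- basic facts about n
  have hn2 : 2 ≤ n := le_trans (le_max_left _ _) hn
  have hnR : Real.exp (4 / ε) ≤ (n : ℝ) :=
    le_trans (Nat.le_ceil _) (by exact_mod_cast le_trans (le_max_right _ _) hn)
  have hn0 : (0 : ℝ) < n := lt_of_lt_of_le (Real.exp_pos _) hnR
  obtain ⟨L, hLdef⟩ : ∃ L : ℝ, L = Real.log n := ⟨_, rfl⟩
  have hL4 : 4 / ε ≤ L := by
    rw [hLdef, Real.le_log_iff_exp_le hn0]; exact hnR
  have hLpos : (0 : ℝ) < L := lt_of_lt_of_le (by positivity) hL4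
  have hεL : 4 ≤ ε * L := by
    rw [div_le_iff₀ hε] at hL4; linarith
  obtain ⟨M, hMdef⟩ : ∃ M : ℝ, M = ((n ^ 2 : ℕ) : ℝ) := ⟨_, rfl⟩
  have hMeq : M = (n : ℝ) ^ 2 := by push_cast [hMdef]; ring
  have hn2R : (2 : ℝ) ≤ n := by exact_mod_cast hn2
  have hM4 : (4 : ℝ) ≤ M := by rw [hMeq]; nlinarith
  have hML : L ≤ M := by
    have := Real.log_le_sub_one_of_pos hn0
    rw [hMeq]; nlinarith
  -- define k
  obtain ⟨x, hxdef⟩ : ∃ x : ℝ, x = 2 * M / (ε * L) := ⟨_, rfl⟩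
  have hxpos : 0 < x := by rw [hxdef]; positivity
  obtain ⟨k, hkdef⟩ : ∃ k : ℕ, k = ⌈x⌉₊ := ⟨_, rfl⟩
  have hxk : x ≤ (k : ℝ) := by rw [hkdef]; exact Nat.le_ceil x
  have hkx : (k : ℝ) ≤ x + 1 := by
    rw [hkdef]; exact le_of_lt (Nat.ceil_lt_add_one (le_of_lt hxpos))
  have hk1 : 1 ≤ k := Nat.one_le_iff_ne_zero.mpr (by
    simp [hkdef, Nat.ceil_eq_zero, not_le, hxpos])
  have hxM : x ≤ M / 2 := by
    rw [hxdef, div_le_iff₀ (by positivity : (0:ℝ) < ε * L)]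
    nlinarith
  have hkM : (k : ℝ) ≤ M := by nlinarith
  -- t is big
  have hrpow : (n : ℝ) ^ ((2 : ℝ) + ε) = (n : ℝ) ^ 2 * (n : ℝ) ^ ε := by
    rw [Real.rpow_add hn0]
    norm_num [Real.rpow_two]
  have hnε : (n : ℝ) ^ ε = Real.exp (ε * L) := by
    rw [Real.rpow_def_of_pos hn0, mul_comm, hLdef]
  have hexp4 : (4 : ℝ) ≤ Real.exp (ε * L) := by
    have h5 : (4 : ℝ) + 1 ≤ Real.exp 4 := Real.add_one_le_exp 4
    have := Real.exp_le_exp.mpr hεL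
    linarith
  have hTM : M * Real.exp (ε * L) < (t : ℝ) := by
    rw [← hnε, hMeq, ← hrpow]; exact ht
  have hT4M : 4 * M < (t : ℝ) := by nlinarith
  have hkt : k ≤ t := by
    have : (k : ℝ) < (t : ℝ) := by nlinarith
    exact_mod_cast le_of_lt this
  -- the key counting inequality
  have hbcast0 : ((t + 1 - k : ℕ) : ℝ) = (t : ℝ) + 1 - (k : ℝ) := by
    have h : k ≤ t + 1 := by omega
    push_cast [Nat.cast_sub h]
    ring
  obtain ⟨b, hbdef⟩ : ∃ b : ℝ, b = (t : ℝ) + 1 - (k : ℝ) := ⟨_, rfl⟩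
  have hbT : (t : ℝ) / 2 ≤ b := by nlinarith
  have hbk : Real.exp (ε * L / 2) < b / (k : ℝ) := by
    have hkpos : (0 : ℝ) < k := by exact_mod_cast hk1
    have h1 : Real.exp (ε * L / 2) * (2 : ℝ) ≤ Real.exp (ε * L) := by
      have : Real.exp (ε * L / 2) * Real.exp (ε * L / 2) = Real.exp (ε * L) := by
        rw [← Real.exp_add]; ring_nf
      nlinarith [Real.add_one_le_exp (ε * L / 2), hεL, Real.exp_pos (ε * L / 2)]
    rw [lt_div_iff₀ hkpos]
    -- b ≥ t/2 > M * exp(εL) / 2 ≥ M * exp(εL/2) ≥ k * exp(εL/2)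
    nlinarith [Real.exp_pos (ε * L / 2), hkM, hbT, hTM, h1]
  have hchoose : 2 ^ (n ^ 2) < t.choose k := by
    have hc : ((2 : ℕ) ^ (n ^ 2) : ℝ) < (t.choose k : ℝ) := by
      have hp : (((t + 1 - k : ℕ) : ℝ)) ^ k / (k.factorial : ℝ) ≤ (t.choose k : ℝ) :=
        Nat.pow_le_choose k t
      have hkpos : (0 : ℝ) < (k : ℝ) := by exact_mod_cast hk1
      have hbpos : (0 : ℝ) < b := by nlinarith
      have hfact : (k.factorial : ℝ) ≤ (k : ℝ) ^ k := by
        exact_mod_cast Nat.factorial_le_pow k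
      have hfpos : (0 : ℝ) < (k.factorial : ℝ) := by exact_mod_cast k.factorial_pos
      have h1 : b ^ k / (k : ℝ) ^ k ≤ b ^ k / (k.factorial : ℝ) :=
        div_le_div_of_nonneg_left (by positivity) hfpos hfact
      have h2 : (b / (k : ℝ)) ^ k = b ^ k / (k : ℝ) ^ k := div_pow b _ k
      have h3 : Real.exp (ε * L / 2) ^ k < (b / (k : ℝ)) ^ k := by
        apply pow_lt_pow_left₀ hbk (le_of_lt (Real.exp_pos _))
        omega
      have h4 : Real.exp M ≤ Real.exp (ε * L / 2) ^ k := by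
        rw [← Real.exp_nat_mul]
        apply Real.exp_le_exp.mpr
        have : ε * L / 2 * x = M := by
          rw [hxdef]; field_simp
        calc M = ε * L / 2 * x := this.symm
          _ ≤ (k : ℝ) * (ε * L / 2) := by nlinarith
      have h5 : ((2 : ℕ) ^ (n ^ 2) : ℝ) < Real.exp M := by
        push_cast
        have : (2 : ℝ) ^ (n ^ 2) = Real.exp ((n ^ 2 : ℕ) * Real.log 2) := by
          rw [Real.exp_nat_mul, Real.exp_log (by norm_num)]
        rw [this]
        apply Real.exp_lt_exp.mpr
        have hlog2 : Real.log 2 < 1 := by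
          nlinarith [Real.log_two_lt_d9]
        rw [hMdef]
        have hMpos : (0 : ℝ) < ((n ^ 2 : ℕ) : ℝ) := by positivity
        calc ((n ^ 2 : ℕ) : ℝ) * Real.log 2 < ((n ^ 2 : ℕ) : ℝ) * 1 :=
              (mul_lt_mul_iff_right₀ hMpos).mpr hlog2
          _ = ((n ^ 2 : ℕ) : ℝ) := mul_one _
      have hbp : (((t + 1 - k : ℕ) : ℝ)) ^ k = b ^ k := by
        rw [hbcast0, ← hbdef]
      calc ((2 : ℕ) ^ (n ^ 2) : ℝ) < Real.exp M := h5
        _ ≤ Real.exp (ε * L / 2) ^ k := h4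
        _ < (b / (k : ℝ)) ^ k := h3
        _ = b ^ k / (k : ℝ) ^ k := h2
        _ ≤ b ^ k / (k.factorial : ℝ) := h1
        _ = (((t + 1 - k : ℕ) : ℝ)) ^ k / (k.factorial : ℝ) := by rw [hbp]
        _ ≤ (t.choose k : ℝ) := hp
    exact_mod_cast hc
  have hcount : 2 ^ (n ^ 2) < S.card.choose k :=
    lt_of_lt_of_le hchoose (Nat.choose_le_choose k hS)
  obtain ⟨S', hS'sub, hS'ne, hS'card, hS'sum⟩ := aux_pigeon_zero_sum S hcount
  refine ⟨S', hS'sub, hS'ne, ?_, hS'sum⟩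
  have hc2 : (S'.card : ℝ) ≤ 2 * (k : ℝ) := by exact_mod_cast hS'card
  rw [← hMeq, ← hLdef, le_div_iff₀ hLpos]
  have hxL : x * (ε * L) = 2 * M := by
    rw [hxdef]; field_simp
  have h2L : 2 * L ≤ 2 * M := by linarith
  -- 2k·L ≤ (2x+2)·L = (4M/ε) + 2L ≤ 4M/ε + 2M = (4/ε+2)·M
  have hxLe : x * L = 2 * M / ε := by
    rw [hxdef]; field_simp
  have hcL : (S'.card : ℝ) * L ≤ 2 * (k : ℝ) * L :=
    mul_le_mul_of_nonneg_right hc2 hLpos.le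
  have h2kL : 2 * (k : ℝ) * L ≤ 4 * M / ε + 2 * M := by
    have h1 : (k : ℝ) * L ≤ (x + 1) * L := mul_le_mul_of_nonneg_right hkx hLpos.le
    have hxx : (x + 1) * L = 2 * M / ε + L := by rw [add_mul, hxLe, one_mul]
    have h1' : (k : ℝ) * L ≤ 2 * M / ε + L := hxx ▸ h1
    have e : 2 * (k : ℝ) * L = 2 * ((k : ℝ) * L) := by ring
    have e2 : 4 * M / ε = 2 * (2 * M / ε) := by ring
    rw [e, e2]
    linarith
  have hgoal : 4 * M / ε + 2 * M = (4 / ε + 2) * M := by ring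
  linarith
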